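/- For every integer ℓ ≥ 24 there exists a tournament on ℓ vertices in which every pair of distinct vertices has a common in-neighbor (equivalently, r(T) = C(ℓ,2)). -/
import Mathlib

/-- A tournament on `Fin ℓ`, given by an arc function: no loops, and for distinct
vertices exactly one of the two arcs is present. -/
def IsTournament {ℓ : ℕ} (E : Fin ℓ → Fin ℓ → Bool) : Prop :=
  (∀ u, E u u = false) ∧ ∀ u v : Fin ℓ, u ≠ v → (E u v = true ↔ E v u = false)

/-- Quadratic residue relation on `Z/7`. -/
def qr (a b : ℕ) : Bool :=
  decide ((b + 7 - a) % 7 = 1 ∨ (b + 7 - a) % 7 = 2 ∨ (b + 7 - a) % 7 = 4)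

lemma qr_irrefl : ∀ a < 7, qr a a = false := by decide

lemma qr_asymm : ∀ a < 7, ∀ b < 7, a ≠ b → (qr a b = true ↔ qr b a = false) := by decide

lemma qr_dom2 : ∀ a < 7, ∀ b < 7, a ≠ b →
    ∃ c, c < 7 ∧ qr c a = true ∧ qr c b = true := by decide

lemma qr_dom1 : ∀ a < 7, ∃ c, c < 7 ∧ qr c a = true := by decide

/-- For every `ℓ ≥ 24` there is a tournament on `ℓ` vertices in
which every pair of distinct vertices has a common in-neighbor. -/
theorem tournament_every_pair_dominated (ℓ : ℕ) (hℓ : 24 ≤ ℓ) :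
    ∃ E : Fin ℓ → Fin ℓ → Bool, IsTournament E ∧
      ∀ u v : Fin ℓ, u ≠ v → ∃ w : Fin ℓ, E w u = true ∧ E w v = true := by
  refine ⟨fun u v => if u.val < 7 ∧ v.val < 7 then qr u.val v.val
      else decide (u.val < v.val), ⟨?_, ?_⟩, ?_⟩
  · intro u
    by_cases h : u.val < 7
    · simp only [h, and_self, if_true]
      exact qr_irrefl u.val h
    · simp [h]
  · intro u v huv
    have hne : u.val ≠ v.val := fun h => huv (Fin.ext h)
    by_cases hu : u.val < 7 <;> by_cases hv : v.val < 7
    · simp only [hu, hv, and_self, if_true]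
      exact qr_asymm u.val hu v.val hv hne
    · simp only [hu, hv, and_false, false_and, if_false, and_true, if_true, true_and,
        decide_eq_true_eq, decide_eq_false_iff_not]
      omega
    · simp only [hu, hv, and_false, false_and, if_false, and_true, if_true, true_and,
        decide_eq_true_eq, decide_eq_false_iff_not]
      omega
    · simp only [hu, hv, and_self, false_and, if_false, decide_eq_true_eq,
        decide_eq_false_iff_not]
      omega
  · intro u v huv
    have hne : u.val ≠ v.val := fun h => huv (Fin.ext h)
    by_cases hu : u.val < 7 <;> by_cases hv : v.val < 7
    · obtain ⟨c, hc, hca, hcb⟩ := qr_dom2 u.val hu v.val hv hne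
      refine ⟨⟨c, by omega⟩, ?_, ?_⟩
      · simp only [hc, hu, and_self, if_true]; exact hca
      · simp only [hc, hv, and_self, if_true]; exact hcb
    · obtain ⟨c, hc, hca⟩ := qr_dom1 u.val hu
      refine ⟨⟨c, by omega⟩, ?_, ?_⟩
      · simp only [hc, hu, and_self, if_true]; exact hca
      · simp only [hc, hv, and_false, if_false, decide_eq_true_eq]; omega
    · obtain ⟨c, hc, hca⟩ := qr_dom1 v.val hv
      refine ⟨⟨c, by omega⟩, ?_, ?_⟩
      · simp only [hc, hu, and_false, if_false, decide_eq_true_eq]; omega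
      · simp only [hc, hv, and_self, if_true]; exact hca
    · refine ⟨⟨0, by omega⟩, ?_, ?_⟩
      · simp only [hu, and_false, if_false, decide_eq_true_eq]; omega
      · simp only [hv, and_false, if_false, decide_eq_true_eq]; omega
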